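/- Let B, L ⊂ ℝ^ν be finite sets with #B = #L = N such that the matrix N^{-1/2}(e^{2πi b·l})_{b∈B,l∈L} is unitary. Then Σ_{l∈L} |χ_B(t−l)|² = 1 for all t ∈ ℝ^ν, where χ_B(t) = N^{-1} Σ_{b∈B} e^{2πi b·t}. -/

import Mathlib

/-- `χ_B(t) = N^{-1} Σ_{b∈B} e^{2πi b·t}` (with `N = #B`). -/
noncomputable def chiB {ν : ℕ} (B : Finset (Fin ν → ℝ)) (t : Fin ν → ℝ) : ℂ :=
  (B.card : ℂ)⁻¹ * ∑ b ∈ B,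
    Complex.exp ((((2 : ℝ) * Real.pi * ∑ i, b i * t i : ℝ) : ℂ) * Complex.I)

/-- If `N^{-1/2}(e^{2πi b·l})_{b∈B,l∈L}` is unitary, then `Σ_{l∈L} |χ_B(t−l)|² = 1`. -/
theorem sum_chiB_sq_eq_one {ν N : ℕ} (hN : 0 < N)
    (B L : Finset (Fin ν → ℝ))
    (hB : B.card = N) (hL : L.card = N)
    (hH : ∀ b ∈ B, ∀ b' ∈ B,
      ∑ l ∈ L,
          Complex.exp ((((2 : ℝ) * Real.pi * ∑ i, l i * (b' i - b i) : ℝ) : ℂ) * Complex.I)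
        = if b = b' then (N : ℂ) else 0) :
    ∀ t : Fin ν → ℝ, ∑ l ∈ L, ‖chiB B (t - l)‖ ^ 2 = 1 := by
  intro t
  have hNC : (N : ℂ) ≠ 0 := Nat.cast_ne_zero.mpr hN.ne'
  have key : (∑ l ∈ L, ((‖chiB B (t - l)‖ ^ 2 : ℝ) : ℂ)) = 1 := by
    have hnorm : ∀ z : ℂ, ((‖z‖ ^ 2 : ℝ) : ℂ) = z * (starRingEnd ℂ) z := by
      intro z
      rw [Complex.mul_conj]
      norm_cast
      simp [Complex.normSq_eq_norm_sq]
    have expand : ∀ l : Fin ν → ℝ,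
        chiB B (t - l) * (starRingEnd ℂ) (chiB B (t - l)) =
        (N : ℂ)⁻¹ * (N : ℂ)⁻¹ * ∑ b ∈ B, ∑ b' ∈ B,
          Complex.exp ((((2 : ℝ) * Real.pi * ∑ i, (b i - b' i) * t i : ℝ) : ℂ) * Complex.I) *
          Complex.exp ((((2 : ℝ) * Real.pi * ∑ i, l i * (b' i - b i) : ℝ) : ℂ) * Complex.I) := by
      intro l
      unfold chiB
      rw [map_mul, map_sum, hB]
      have hconj : (starRingEnd ℂ) ((N : ℂ)⁻¹) = (N : ℂ)⁻¹ := by simp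
      rw [hconj, mul_mul_mul_comm, Finset.sum_mul_sum]
      congr 1
      apply Finset.sum_congr rfl
      intro b hb
      apply Finset.sum_congr rfl
      intro b' hb'
      have hc : (starRingEnd ℂ) ((((2 : ℝ) * Real.pi * ∑ i, b' i * (t - l) i : ℝ) : ℂ) * Complex.I)
          = -((((2 : ℝ) * Real.pi * ∑ i, b' i * (t - l) i : ℝ) : ℂ) * Complex.I) := by
        rw [map_mul, Complex.conj_ofReal, Complex.conj_I]; ring
      rw [← Complex.exp_conj, hc, ← Complex.exp_add, ← Complex.exp_add]
      have hreal : ((2 : ℝ) * Real.pi * ∑ i, b i * (t - l) i) -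
            ((2 : ℝ) * Real.pi * ∑ i, b' i * (t - l) i)
          = ((2 : ℝ) * Real.pi * ∑ i, (b i - b' i) * t i) +
            ((2 : ℝ) * Real.pi * ∑ i, l i * (b' i - b i)) := by
        simp only [Pi.sub_apply]
        have h : (∑ i, b i * (t i - l i)) - ∑ i, b' i * (t i - l i)
            = (∑ i, (b i - b' i) * t i) + ∑ i, l i * (b' i - b i) := by
          rw [← Finset.sum_sub_distrib, ← Finset.sum_add_distrib]
          exact Finset.sum_congr rfl fun i _ => by ring
        linear_combination 2 * Real.pi * h
      congr 1
      rw [← sub_eq_add_neg, ← sub_mul, ← Complex.ofReal_sub, ← add_mul, ← Complex.ofReal_add]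
      exact congrArg (· * Complex.I) (congrArg Complex.ofReal hreal)
    calc ∑ l ∈ L, ((‖chiB B (t - l)‖ ^ 2 : ℝ) : ℂ)
        = ∑ l ∈ L, chiB B (t - l) * (starRingEnd ℂ) (chiB B (t - l)) :=
          Finset.sum_congr rfl fun l _ => hnorm _
      _ = (N : ℂ)⁻¹ * (N : ℂ)⁻¹ * ∑ l ∈ L, ∑ b ∈ B, ∑ b' ∈ B,
          Complex.exp ((((2 : ℝ) * Real.pi * ∑ i, (b i - b' i) * t i : ℝ) : ℂ) * Complex.I) *
          Complex.exp ((((2 : ℝ) * Real.pi * ∑ i, l i * (b' i - b i) : ℝ) : ℂ) * Complex.I) := by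
          rw [Finset.mul_sum]
          exact Finset.sum_congr rfl fun l _ => expand l
      _ = (N : ℂ)⁻¹ * (N : ℂ)⁻¹ * ∑ b ∈ B, ∑ b' ∈ B,
          Complex.exp ((((2 : ℝ) * Real.pi * ∑ i, (b i - b' i) * t i : ℝ) : ℂ) * Complex.I) *
          (if b = b' then (N : ℂ) else 0) := by
          congr 1
          rw [Finset.sum_comm]
          apply Finset.sum_congr rfl
          intro b hb
          rw [Finset.sum_comm]
          apply Finset.sum_congr rfl
          intro b' hb'
          rw [← Finset.mul_sum, hH b hb b' hb']
      _ = (N : ℂ)⁻¹ * (N : ℂ)⁻¹ * ∑ b ∈ B, (N : ℂ) := by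
          congr 1
          apply Finset.sum_congr rfl
          intro b hb
          simp only [mul_ite, mul_zero]
          rw [Finset.sum_ite_eq B b]
          simp [hb]
      _ = 1 := by
          rw [Finset.sum_const, hB]
          field_simp
          rw [nsmul_eq_mul]; ring
  exact_mod_cast key
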